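/- Let ρ = Σ_i r_i |u_i⟩⟨u_i| and σ = Σ_j s_j |v_j⟩⟨v_j| be states with {u_i}, {v_j} orthonormal bases, and let P(i,j) = r_i |⟨u_i,v_j⟩|², Q(i,j) = s_j |⟨u_i,v_j⟩|² be the associated probability measures on I×I. Then supp ρ ⊆ supp σ if and only if P is absolutely continuous with respect to Q. -/

import Mathlib

open scoped InnerProductSpace ENNReal NNReal

/-- Auxiliary: inner product of a basis vector with the action of a diagonal state. -/
lemma aux_inner {H : Type*} [NormedAddCommGroup H] [InnerProductSpace ℂ H]
    [CompleteSpace H] {I : Type*}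
    (t : I → ℝ) (ht0 : ∀ i, 0 ≤ t i) (ht1 : ∀ i, t i ≤ 1)
    (e : HilbertBasis I ℂ H) (w : H) (k : I) :
    ⟪(e k : H), ∑' i, (t i : ℂ) • ⟪(e i : H), w⟫_ℂ • (e i : H)⟫_ℂ
      = (t k : ℂ) * ⟪(e k : H), w⟫_ℂ := by
  classical
  set c : I → ℂ := fun i => (t i : ℂ) * ⟪(e i : H), w⟫_ℂ with hc_def
  have hmem : Memℓp c 2 := by
    apply memℓp_gen
    have hrepr : Summable fun i => ‖e.repr w i‖ ^ (2 : ℝ≥0∞).toReal :=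
      (memℓp_gen_iff (by norm_num)).1 (lp.memℓp (e.repr w))
    refine Summable.of_nonneg_of_le (fun i => ?_) (fun i => ?_) hrepr
    · positivity
    · apply Real.rpow_le_rpow (norm_nonneg _) _ ENNReal.toReal_nonneg
      rw [e.repr_apply_apply, hc_def]
      simp only [norm_mul, Complex.norm_real, Real.norm_eq_abs,
        abs_of_nonneg (ht0 i)]
      calc t i * ‖⟪(e i : H), w⟫_ℂ‖ ≤ 1 * ‖⟪(e i : H), w⟫_ℂ‖ := by
            exact mul_le_mul_of_nonneg_right (ht1 i) (norm_nonneg _)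
        _ = ‖⟪(e i : H), w⟫_ℂ‖ := one_mul _
  set f : lp (fun _ : I => ℂ) 2 := ⟨c, hmem⟩ with hf_def
  have hsum : HasSum (fun i => (f : ∀ _ : I, ℂ) i • (e i : H)) (e.repr.symm f) :=
    e.hasSum_repr_symm f
  have hfc : ∀ i, (f : ∀ _ : I, ℂ) i = c i := fun i => rfl
  have heq : (fun i => (t i : ℂ) • ⟪(e i : H), w⟫_ℂ • (e i : H))
      = fun i => (f : ∀ _ : I, ℂ) i • (e i : H) := by
    funext i
    rw [hfc, hc_def, smul_smul]
  rw [heq, hsum.tsum_eq, ← e.repr_apply_apply,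
    LinearIsometryEquiv.apply_symm_apply]

theorem stmt4 {H : Type*} [NormedAddCommGroup H] [InnerProductSpace ℂ H]
    [CompleteSpace H] [TopologicalSpace.SeparableSpace H]
    {I : Type*} [Countable I]
    (r s : I → ℝ) (hr : ∀ i, 0 ≤ r i) (hs : ∀ j, 0 ≤ s j)
    (hr1 : HasSum r 1) (hs1 : HasSum s 1)
    (u v : HilbertBasis I ℂ H)
    (ρ σ : H →L[ℂ] H)
    (hρ : ∀ w, ρ w = ∑' i, (r i : ℂ) • ⟪(u i : H), w⟫_ℂ • (u i : H))
    (hσ : ∀ w, σ w = ∑' j, (s j : ℂ) • ⟪(v j : H), w⟫_ℂ • (v j : H)) :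
    (LinearMap.ker (ρ : H →ₗ[ℂ] H))ᗮ ≤ (LinearMap.ker (σ : H →ₗ[ℂ] H))ᗮ ↔
      ∀ i j, s j * ‖⟪(u i : H), (v j : H)⟫_ℂ‖ ^ 2 = 0 →
        r i * ‖⟪(u i : H), (v j : H)⟫_ℂ‖ ^ 2 = 0 := by
  classical
  have hr_le : ∀ i, r i ≤ 1 := fun i => le_hasSum hr1 i (fun j _ => hr j)
  have hs_le : ∀ j, s j ≤ 1 := fun j => le_hasSum hs1 j (fun k _ => hs k)
  -- Key inner product formulas
  have hρ_inner : ∀ (w : H) (i : I), ⟪(u i : H), ρ w⟫_ℂ = (r i : ℂ) * ⟪(u i : H), w⟫_ℂ := by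
    intro w i
    rw [hρ w]
    exact aux_inner r hr hr_le u w i
  have hσ_inner : ∀ (w : H) (j : I), ⟪(v j : H), σ w⟫_ℂ = (s j : ℂ) * ⟪(v j : H), w⟫_ℂ := by
    intro w j
    rw [hσ w]
    exact aux_inner s hs hs_le v w j
  -- the complement condition is equivalent to ker σ ≤ ker ρ
  have hker_iff : ((LinearMap.ker (ρ : H →ₗ[ℂ] H))ᗮ ≤ (LinearMap.ker (σ : H →ₗ[ℂ] H))ᗮ) ↔
      (LinearMap.ker (σ : H →ₗ[ℂ] H) ≤ LinearMap.ker (ρ : H →ₗ[ℂ] H)) := by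
    constructor
    · intro h
      have h2 := Submodule.orthogonal_le h
      have hcρ : IsClosed ((LinearMap.ker (ρ : H →ₗ[ℂ] H) : Submodule ℂ H) : Set H) :=
        ContinuousLinearMap.isClosed_ker ρ
      have hcσ : IsClosed ((LinearMap.ker (σ : H →ₗ[ℂ] H) : Submodule ℂ H) : Set H) :=
        ContinuousLinearMap.isClosed_ker σ
      haveI : CompleteSpace (LinearMap.ker (ρ : H →ₗ[ℂ] H) : Submodule ℂ H) := hcρ.completeSpace_coe
      haveI : CompleteSpace (LinearMap.ker (σ : H →ₗ[ℂ] H) : Submodule ℂ H) := hcσ.completeSpace_coe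
      rwa [Submodule.orthogonal_orthogonal, Submodule.orthogonal_orthogonal] at h2
    · exact fun h => Submodule.orthogonal_le h
  rw [hker_iff]
  have hvv : ∀ k j : I, ⟪(v k : H), (v j : H)⟫_ℂ = if k = j then 1 else 0 :=
    fun k j => orthonormal_iff_ite.1 v.orthonormal k j
  constructor
  · -- supp inclusion → absolute continuity
    intro h i j hQ
    by_cases hiv : ⟪(u i : H), (v j : H)⟫_ℂ = 0
    · rw [hiv]; simp
    · have hnorm : ‖⟪(u i : H), (v j : H)⟫_ℂ‖ ^ 2 ≠ 0 := by
        simpa using hiv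
      have hsj : s j = 0 := by
        rcases mul_eq_zero.1 hQ with h' | h'
        · exact h'
        · exact absurd h' hnorm
      -- v j ∈ ker σ
      have hvker : (v j : H) ∈ LinearMap.ker (σ : H →ₗ[ℂ] H) := by
        rw [LinearMap.mem_ker, ContinuousLinearMap.coe_coe]
        rw [hσ]
        have : (fun k => (s k : ℂ) • ⟪(v k : H), (v j : H)⟫_ℂ • (v k : H))
            = fun _ => (0 : H) := by
          funext k
          by_cases hkj : k = j
          · subst hkj; rw [hsj]; simp
          · rw [hvv k j, if_neg hkj]; simp
        rw [this, tsum_zero]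
      have hρvj : ρ (v j) = 0 := h hvker
      have : (r i : ℂ) * ⟪(u i : H), (v j : H)⟫_ℂ = 0 := by
        rw [← hρ_inner (v j) i, hρvj, inner_zero_right]
      rcases mul_eq_zero.1 this with h' | h'
      · have : r i = 0 := by exact_mod_cast h'
        rw [this, zero_mul]
      · exact absurd h' hiv
  · -- absolute continuity → supp inclusion
    intro h w hw
    rw [LinearMap.mem_ker, ContinuousLinearMap.coe_coe] at hw ⊢
    have hcoef : ∀ j, (s j : ℂ) * ⟪(v j : H), w⟫_ℂ = 0 := by
      intro j
      rw [← hσ_inner w j, hw, inner_zero_right]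
    rw [hρ w]
    have : (fun i => (r i : ℂ) • ⟪(u i : H), w⟫_ℂ • (u i : H)) = fun _ => (0 : H) := by
      funext i
      by_cases hri : r i = 0
      · rw [hri]; simp
      · have huiw : ⟪(u i : H), w⟫_ℂ = 0 := by
          have hexp := (v.hasSum_inner_mul_inner (u i : H) w).tsum_eq
          rw [← hexp]
          have : (fun j => ⟪(u i : H), (v j : H)⟫_ℂ * ⟪(v j : H), w⟫_ℂ)
              = fun _ => (0 : ℂ) := by
            funext j
            by_cases hsj : s j = 0
            · have hQ : s j * ‖⟪(u i : H), (v j : H)⟫_ℂ‖ ^ 2 = 0 := by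
                rw [hsj, zero_mul]
              have hP := h i j hQ
              rcases mul_eq_zero.1 hP with h' | h'
              · exact absurd h' hri
              · have : ⟪(u i : H), (v j : H)⟫_ℂ = 0 := by
                  simpa using h'
                rw [this, zero_mul]
            · have : ⟪(v j : H), w⟫_ℂ = 0 := by
                rcases mul_eq_zero.1 (hcoef j) with h' | h'
                · exact absurd (by exact_mod_cast h' : s j = 0) hsj
                · exact h'
              rw [this, mul_zero]
          rw [this, tsum_zero]
        rw [huiw]; simp
    rw [this, tsum_zero]
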